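/- Suppose C ⊆ Pr(𝕋) is minimal with respect to the properties of being nonempty, weak*-compact, convex, and ˆ-closed, and suppose ⪯ is a linear quasi-order on 𝕋 such that s ≺ sˆt and t ≺ sˆt for all s,t ∈ 𝕋. If I ⊆ 𝕋 is an interval in (𝕋, ⪯) (i.e., s ⪯ t ⪯ u with s,u ∈ I implies t ∈ I), then either μ(I) = 1 for every μ ∈ C or μ(I) = 0 for every μ ∈ C. -/

import Mathlib

open scoped Classical

/-- The free binary system (free magma) on one generator. -/
abbrev 𝕋 : Type := FreeMagma Unit

/-- The generator `1` of `𝕋`. -/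
def e1 : 𝕋 := FreeMagma.of ()

/-- `#(t)`: the number of occurrences of the generator in `t`. -/
def cnt : 𝕋 → ℕ
  | FreeMagma.of _ => 1
  | FreeMagma.mul a b => cnt a + cnt b

/-- The space `ℓ^∞(S)` of bounded real-valued functions on `S`. -/
def Bdd (S : Type*) : Type _ := {f : S → ℝ // ∃ M, ∀ s, |f s| ≤ M}

/-- Package a function as an element of `Bdd S` (junk value if unbounded). -/
noncomputable def liftBdd {S : Type*} (g : S → ℝ) : Bdd S :=
  if h : ∃ M, ∀ s, |g s| ≤ M then ⟨g, h⟩ else ⟨fun _ => 0, 0, fun _ => by simp⟩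

/-- The constant function as an element of `Bdd S`. -/
def constB (S : Type*) (c : ℝ) : Bdd S := ⟨fun _ => c, |c|, fun _ => le_rfl⟩

/-- The characteristic function of `E` as an element of `Bdd S`. -/
noncomputable def indB {S : Type*} (E : Set S) : Bdd S :=
  liftBdd (fun s => if s ∈ E then 1 else 0)

/-- `Pr S`: finitely additive probability measures on `S`, identified with the
positive normalized linear functionals on `ℓ^∞(S)`.  The weak* topology is the
subspace topology inherited from the product topology on `Bdd S → ℝ`. -/
def PrSet (S : Type*) : Set (Bdd S → ℝ) :=
  {φ | (∀ f g h : Bdd S, (∀ s, h.1 s = f.1 s + g.1 s) → φ h = φ f + φ g) ∧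
       (∀ (c : ℝ) (f g : Bdd S), (∀ s, g.1 s = c * f.1 s) → φ g = c * φ f) ∧
       (∀ f : Bdd S, (∀ s, 0 ≤ f.1 s) → 0 ≤ φ f) ∧
       φ (constB S 1) = 1}

/-- `μ(E)`: the measure of a set `E ⊆ S`. -/
noncomputable def mE {S : Type*} (φ : Bdd S → ℝ) (E : Set S) : ℝ := φ (indB E)

/-- The product `μ ⊗ ν` of finitely additive measures:
`μ⊗ν(f) = μ(x ↦ ν(y ↦ f(x,y)))`. -/
noncomputable def prodM {S T : Type*} (φ : Bdd S → ℝ) (ψ : Bdd T → ℝ) :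
    Bdd (S × T) → ℝ :=
  fun f => φ (liftBdd fun x => ψ (liftBdd fun y => f.1 (x, y)))

/-- The extension of a binary operation `op` on `S` to `Pr S`:
`μ⋆ν(f) = μ(x ↦ ν(y ↦ f(x ⋆ y)))`. -/
noncomputable def starM {S : Type*} (op : S → S → S) (φ ψ : Bdd S → ℝ) :
    Bdd S → ℝ :=
  fun f => φ (liftBdd fun x => ψ (liftBdd fun y => f.1 (op x y)))

/-- The extension of `ˆ` to `Pr 𝕋`. -/
noncomputable def hmul (φ ψ : Bdd 𝕋 → ℝ) : Bdd 𝕋 → ℝ := starM (· * ·) φ ψ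

/-- Finitely supported probability measures: finite convex combinations of
point evaluations. -/
def FinSuppPr (S : Type*) : Set (Bdd S → ℝ) :=
  {φ | ∃ (F : Finset S) (w : S → ℝ), (∀ s ∈ F, 0 ≤ w s) ∧ (∑ s ∈ F, w s) = 1 ∧
      ∀ f : Bdd S, φ f = ∑ s ∈ F, w s * f.1 s}

/-- `𝔸_n`: finitely supported probability measures concentrated on `𝕋_n`. -/
def Asets (n : ℕ) : Set (Bdd 𝕋 → ℝ) :=
  {φ | ∃ (F : Finset 𝕋) (w : 𝕋 → ℝ), (∀ t ∈ F, cnt t = n) ∧ (∀ t ∈ F, 0 ≤ w t) ∧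
      (∑ t ∈ F, w t) = 1 ∧ ∀ f : Bdd 𝕋, φ f = ∑ t ∈ F, w t * f.1 t}

/-- The extension of `+` on `ℕ` to ultrafilters: `A ∈ U+V` iff
`{m : {n : m+n ∈ A} ∈ V} ∈ U`. -/
noncomputable def addU (U V : Ultrafilter ℕ) : Ultrafilter ℕ :=
  U.bind fun m => V.map fun n => m + n

/-- `𝔸_U`: the `U`-limit of the sets `𝔸_m`. -/
def AU (U : Ultrafilter ℕ) : Set (Bdd 𝕋 → ℝ) :=
  {μ | μ ∈ PrSet 𝕋 ∧ ∀ W : Set (Bdd 𝕋 → ℝ), IsOpen W → μ ∈ W →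
      {m : ℕ | (W ∩ Asets m).Nonempty} ∈ U}

/-- The extension of `ˆ` to ultrafilters on `𝕋`: `E ∈ UˆV` iff
`{u : {v : uˆv ∈ E} ∈ V} ∈ U`. -/
noncomputable def umul (U V : Ultrafilter 𝕋) : Ultrafilter 𝕋 :=
  U.bind fun u => V.map fun v => u * v

/-- Substitution of measures into a term `t`:
`t(μ_0,…,μ_{m-1})(f)` is the nested integral
`μ_0(x_0 ↦ ⋯ μ_{m-1}(x_{m-1} ↦ f(t(x⃗)))⋯)`. -/
noncomputable def substM : 𝕋 → List (Bdd 𝕋 → ℝ) → (Bdd 𝕋 → ℝ)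
  | FreeMagma.of _, μs => μs.headI
  | FreeMagma.mul a b, μs =>
      hmul (substM a (μs.take (cnt a))) (substM b (μs.drop (cnt a)))

/-- `t_k`: iteratively remove the carets of `t` involving only leaves of index
greater than `k`. -/
def tk : 𝕋 → ℕ → 𝕋
  | FreeMagma.of _, _ => e1
  | FreeMagma.mul a b, k => if k < cnt a then tk a k * e1 else a * tk b (k - cnt a)

/-- `l_k(t) = #(t_k) - 2` (truncated subtraction). -/
def lk (t : 𝕋) (k : ℕ) : ℕ := cnt (tk t k) - 2

/-- The subterm `t/σ` of `t` at address `σ` (`false` = left/`0`, `true` = right/`1`). -/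
def subT : 𝕋 → List Bool → Option 𝕋
  | t, [] => some t
  | FreeMagma.of _, _ :: _ => none
  | FreeMagma.mul a b, c :: σ => if c then subT b σ else subT a σ

/-- `σ <_lex ς` for incompatible binary sequences: at the first coordinate where
they differ, `σ` has `0` and `ς` has `1`. -/
def lexLT (σ ς : List Bool) : Prop :=
  ∃ p σ' ς', σ = p ++ (false :: σ') ∧ ς = p ++ (true :: ς')

/-- `x₀·E`. -/
def x0E (E : Set 𝕋) : Set 𝕋 :=
  {x | ∃ a b c : 𝕋, x = a * (b * c) ∧ (a * b) * c ∈ E}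

/-- `x₁·E`. -/
def x1E (E : Set 𝕋) : Set 𝕋 :=
  {x | ∃ s a b c : 𝕋, x = s * (a * (b * c)) ∧ s * ((a * b) * c) ∈ E}

/-- `u_σ` for a nonempty finite binary sequence `σ`. -/
def uSeq : List Bool → 𝕋
  | [] => e1
  | [_] => e1
  | b :: σ => if b then e1 * uSeq σ else uSeq σ * e1

/-- `a ≪ b`: for some `p`, `#(a) < 2^p` and `2^p` divides `#(b)`. -/
def ll (a b : 𝕋) : Prop := ∃ p : ℕ, cnt a < 2 ^ p ∧ 2 ^ p ∣ cnt b

/-- `r↾n`: the first `n` values of `r` as a finite binary sequence. -/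
def rList (r : ℕ → Bool) (n : ℕ) : List Bool := (List.range n).map r

/-- The map `h_r : 𝕋 → 𝕋`. -/
noncomputable def hr (r : ℕ → Bool) : 𝕋 → 𝕋
  | FreeMagma.of _ => uSeq (rList r 1)
  | FreeMagma.mul a b =>
      if ll a b then hr r a * hr r b else uSeq (rList r (cnt a + cnt b))

/-- The action of `h_r` on measures: `h_r(μ)(f) = μ(f ∘ h_r)`. -/
noncomputable def hrM (r : ℕ → Bool) (φ : Bdd 𝕋 → ℝ) : Bdd 𝕋 → ℝ :=
  fun f => φ (liftBdd fun t => f.1 (hr r t))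

/-- `lev`: `l(1) = 0`, `l(aˆb) = l(a) + 1`. -/
def lev : 𝕋 → ℕ
  | FreeMagma.of _ => 0
  | FreeMagma.mul a _ => lev a + 1

/-- `C` is closed under `ˆ`. -/
def HClosed (C : Set (Bdd 𝕋 → ℝ)) : Prop := ∀ μ ∈ C, ∀ ν ∈ C, hmul μ ν ∈ C
section Aux

lemma liftBdd_apply {S : Type*} (g : S → ℝ) (hb : ∃ M, ∀ s, |g s| ≤ M) :
    (liftBdd g).1 = g := by
  have hl : liftBdd g = (⟨g, hb⟩ : Bdd S) := dif_pos hb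
  rw [hl]

lemma indB_apply {S : Type*} (E : Set S) (s : S) :
    (indB E).1 s = if s ∈ E then 1 else 0 := by
  have hb : ∃ M, ∀ t : S, |(if t ∈ E then (1:ℝ) else 0)| ≤ M :=
    ⟨1, fun t => by split <;> simp⟩
  simp only [indB, liftBdd_apply _ hb]

lemma pr_mono {S : Type*} {φ : Bdd S → ℝ} (hφ : φ ∈ PrSet S) (f g : Bdd S)
    (h : ∀ s, f.1 s ≤ g.1 s) : φ f ≤ φ g := by
  obtain ⟨hadd, _, hpos, _⟩ := hφ
  obtain ⟨M, hM⟩ := g.2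
  obtain ⟨N, hN⟩ := f.2
  have hb : ∃ K, ∀ s, |g.1 s - f.1 s| ≤ K := by
    refine ⟨M + N, fun s => ?_⟩
    have h1 := abs_le.1 (hM s)
    have h2 := abs_le.1 (hN s)
    rw [abs_le]
    constructor <;> linarith [h1.1, h1.2, h2.1, h2.2]
  set d : Bdd S := ⟨fun s => g.1 s - f.1 s, hb⟩ with hd
  have he : φ g = φ f + φ d := hadd f d g (fun s => by show g.1 s = f.1 s + (g.1 s - f.1 s); ring)
  have hp : 0 ≤ φ d := hpos d (fun s => sub_nonneg.2 (h s))
  linarith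

lemma pr_nonneg_ind {S : Type*} {φ : Bdd S → ℝ} (hφ : φ ∈ PrSet S) (E : Set S) :
    0 ≤ φ (indB E) :=
  hφ.2.2.1 _ (fun s => by rw [indB_apply]; split <;> norm_num)

lemma pr_ind_le_one {S : Type*} {φ : Bdd S → ℝ} (hφ : φ ∈ PrSet S) (E : Set S) :
    φ (indB E) ≤ 1 := by
  have h := pr_mono hφ (indB E) (constB S 1)
    (fun s => by rw [indB_apply]; split <;> norm_num [constB])
  rwa [hφ.2.2.2] at h

lemma hmul_ind_le {μ ν : Bdd 𝕋 → ℝ} (hμ : μ ∈ PrSet 𝕋) (hν : ν ∈ PrSet 𝕋)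
    (J : Set 𝕋) (hdown : ∀ x y : 𝕋, x * y ∈ J → x ∈ J ∧ y ∈ J) :
    hmul μ ν (indB J) ≤ μ (indB J) * ν (indB J) := by
  set c := ν (indB J) with hc
  have hc0 : 0 ≤ c := pr_nonneg_ind hν J
  set F : 𝕋 → ℝ := fun x => ν (liftBdd fun y => (indB J).1 (x * y)) with hF
  have hinb : ∀ x, ∃ M, ∀ y : 𝕋, |(indB J).1 (x * y)| ≤ M := by
    intro x
    refine ⟨1, fun y => ?_⟩
    rw [indB_apply]; split <;> simp
  have hgx : ∀ x y : 𝕋, (liftBdd fun y => (indB J).1 (x * y)).1 y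
      = if x * y ∈ J then 1 else 0 := by
    intro x y
    rw [liftBdd_apply _ (hinb x)]
    exact indB_apply J (x * y)
  have hF0 : ∀ x, 0 ≤ F x := by
    intro x
    exact hν.2.2.1 _ (fun y => by rw [hgx]; split <;> norm_num)
  have hFle : ∀ x, F x ≤ (if x ∈ J then 1 else 0) * c := by
    intro x
    by_cases hx : x ∈ J
    · simp only [hx, if_true, one_mul]
      refine pr_mono hν _ (indB J) (fun y => ?_)
      rw [hgx, indB_apply]
      split_ifs with h1 h2
      · exact le_rfl
      · exact absurd (hdown x y h1).2 h2
      · norm_num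
      · exact le_rfl
    · have hz : ∀ y : 𝕋, (liftBdd fun y => (indB J).1 (x * y)).1 y
          = 0 * (liftBdd fun y => (indB J).1 (x * y)).1 y := by
        intro y
        rw [hgx]
        have : x * y ∉ J := fun h => hx (hdown x y h).1
        simp [this]
      have := hν.2.1 0 _ _ hz
      simp only [hx, if_false, zero_mul]
      rw [show F x = ν (liftBdd fun y => (indB J).1 (x * y)) from rfl, this]
      norm_num
  have hFbd : ∃ M, ∀ x, |F x| ≤ M := by
    refine ⟨c, fun x => ?_⟩
    rw [abs_le]
    refine ⟨by linarith [hF0 x], ?_⟩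
    have := hFle x
    split_ifs at this with h
    · linarith
    · linarith
  set g2 : Bdd 𝕋 := ⟨fun s => c * (indB J).1 s, |c|, fun s => by
    rw [abs_mul, indB_apply]
    have : |(if s ∈ J then (1:ℝ) else 0)| ≤ 1 := by split <;> simp
    nlinarith [abs_nonneg c]⟩ with hg2
  have hsm : μ g2 = c * μ (indB J) := hμ.2.1 c (indB J) g2 (fun s => rfl)
  have hmono : μ (liftBdd F) ≤ μ g2 := by
    refine pr_mono hμ _ _ (fun x => ?_)
    rw [liftBdd_apply _ hFbd]
    simp only [hg2, indB_apply]
    calc F x ≤ (if x ∈ J then 1 else 0) * c := hFle x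
      _ = c * (if x ∈ J then 1 else 0) := mul_comm _ _
  calc hmul μ ν (indB J) = μ (liftBdd F) := rfl
    _ ≤ μ g2 := hmono
    _ = c * μ (indB J) := hsm
    _ = μ (indB J) * ν (indB J) := mul_comm _ _

lemma down_zero_one (C : Set (Bdd 𝕋 → ℝ)) (hC : C ⊆ PrSet 𝕋)
    (hne : C.Nonempty) (hcomp : IsCompact C) (hconv : Convex ℝ C) (hcl : HClosed C)
    (hmin : ∀ D ⊆ C, D.Nonempty → IsCompact D → Convex ℝ D → HClosed D → D = C)
    (J : Set 𝕋) (hdown : ∀ x y : 𝕋, x * y ∈ J → x ∈ J ∧ y ∈ J) :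
    ∃ a : ℝ, (a = 0 ∨ a = 1) ∧ ∀ μ ∈ C, μ (indB J) = a := by
  have hcont : Continuous (fun φ : Bdd 𝕋 → ℝ => φ (indB J)) := continuous_apply _
  obtain ⟨μ₀, hμ₀, hminOn⟩ := hcomp.exists_isMinOn hne hcont.continuousOn
  set a := μ₀ (indB J) with ha
  have hmin' : ∀ μ ∈ C, a ≤ μ (indB J) := fun μ hμ => hminOn hμ
  have ha0 : 0 ≤ a := pr_nonneg_ind (hC hμ₀) J
  have ha1 : a ≤ 1 := pr_ind_le_one (hC hμ₀) J
  set D := C ∩ {φ | φ (indB J) ≤ a} with hD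
  have hDC : D ⊆ C := Set.inter_subset_left
  have hDne : D.Nonempty := ⟨μ₀, hμ₀, ha.ge⟩
  have hDcomp : IsCompact D := hcomp.inter_right (isClosed_le hcont continuous_const)
  have hDconv : Convex ℝ D :=
    hconv.inter (convex_halfSpace_le ⟨fun _ _ => rfl, fun _ _ => rfl⟩ a)
  have hDcl : HClosed D := by
    intro μ hμ ν hν
    refine ⟨hcl μ hμ.1 ν hν.1, ?_⟩
    have h1 := hmul_ind_le (hC hμ.1) (hC hν.1) J hdown
    have hμa : μ (indB J) = a := le_antisymm hμ.2 (hmin' μ hμ.1)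
    have hνa : ν (indB J) = a := le_antisymm hν.2 (hmin' ν hν.1)
    rw [hμa, hνa] at h1
    show hmul μ ν (indB J) ≤ a
    nlinarith
  have hDeq := hmin D hDC hDne hDcomp hDconv hDcl
  have hconst : ∀ μ ∈ C, μ (indB J) = a := by
    intro μ hμ
    rw [← hDeq] at hμ
    exact le_antisymm hμ.2 (hmin' μ hμ.1)
  have hsq : a ≤ a * a := by
    have h2 := hcl μ₀ hμ₀ μ₀ hμ₀
    have h3 := hmul_ind_le (hC hμ₀) (hC hμ₀) J hdown
    have h4 := hconst _ h2
    rw [h4] at h3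
    exact h3
  refine ⟨a, ?_, hconst⟩
  rcases eq_or_lt_of_le ha0 with h | h
  · exact Or.inl h.symm
  · right
    nlinarith

end Aux

/-- Claim 5.5: if `C ⊆ Pr(𝕋)` is minimal nonempty compact convex
`ˆ`-closed and `I` is an interval of a linear quasi-order `⪯` on `𝕋` with
`s, t ≺ sˆt`, then `μ(I) = 1` for all `μ ∈ C` or `μ(I) = 0` for all `μ ∈ C`. -/
theorem interval_zero_one_law (C : Set (Bdd 𝕋 → ℝ)) (hC : C ⊆ PrSet 𝕋)
    (hne : C.Nonempty) (hcomp : IsCompact C) (hconv : Convex ℝ C) (hcl : HClosed C)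
    (hmin : ∀ D ⊆ C, D.Nonempty → IsCompact D → Convex ℝ D → HClosed D → D = C)
    (r : 𝕋 → 𝕋 → Prop)
    (hrefl : ∀ s, r s s)
    (htrans : ∀ a b c, r a b → r b c → r a c)
    (htotal : ∀ s t, r s t ∨ r t s)
    (hop : ∀ s t : 𝕋, (r s (s * t) ∧ ¬ r (s * t) s) ∧ (r t (s * t) ∧ ¬ r (s * t) t))
    (I : Set 𝕋) (hI : ∀ s t u : 𝕋, r s t → r t u → s ∈ I → u ∈ I → t ∈ I) :
    (∀ μ ∈ C, mE μ I = 1) ∨ (∀ μ ∈ C, mE μ I = 0) := by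
  set J2 : Set 𝕋 := {t | ∃ u ∈ I, r t u} with hJ2
  set J1 : Set 𝕋 := J2 \ I with hJ1
  have hdown2 : ∀ x y : 𝕋, x * y ∈ J2 → x ∈ J2 ∧ y ∈ J2 := by
    intro x y hxy
    obtain ⟨u, huI, hru⟩ := hxy
    exact ⟨⟨u, huI, htrans _ _ _ (hop x y).1.1 hru⟩,
           ⟨u, huI, htrans _ _ _ (hop x y).2.1 hru⟩⟩
  have hdown1 : ∀ x y : 𝕋, x * y ∈ J1 → x ∈ J1 ∧ y ∈ J1 := by
    intro x y hxy
    obtain ⟨hxy2, hxyI⟩ := hxy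
    obtain ⟨u, huI, hru⟩ := hxy2
    have hx2 : x ∈ J2 := ⟨u, huI, htrans _ _ _ (hop x y).1.1 hru⟩
    have hy2 : y ∈ J2 := ⟨u, huI, htrans _ _ _ (hop x y).2.1 hru⟩
    refine ⟨⟨hx2, fun hxI => hxyI ?_⟩, ⟨hy2, fun hyI => hxyI ?_⟩⟩
    · exact hI x (x * y) u (hop x y).1.1 hru hxI huI
    · exact hI y (x * y) u (hop x y).2.1 hru hyI huI
  obtain ⟨a2, ha2, hconst2⟩ :=
    down_zero_one C hC hne hcomp hconv hcl hmin J2 hdown2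
  obtain ⟨a1, ha1, hconst1⟩ :=
    down_zero_one C hC hne hcomp hconv hcl hmin J1 hdown1
  have hsplit : ∀ μ ∈ C, μ (indB J2) = μ (indB J1) + μ (indB I) := by
    intro μ hμ
    refine (hC hμ).1 (indB J1) (indB I) (indB J2) (fun s => ?_)
    rw [indB_apply, indB_apply, indB_apply]
    by_cases hs : s ∈ I
    · have hs2 : s ∈ J2 := ⟨s, hs, hrefl s⟩
      have hs1 : s ∉ J1 := fun h => h.2 hs
      simp [hs, hs2, hs1]
    · by_cases h2 : s ∈ J2
      · have hs1 : s ∈ J1 := ⟨h2, hs⟩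
        simp [hs, h2, hs1]
      · have hs1 : s ∉ J1 := fun h => h2 h.1
        simp [hs, h2, hs1]
  have hval : ∀ μ ∈ C, mE μ I = a2 - a1 := by
    intro μ hμ
    have := hsplit μ hμ
    rw [hconst2 μ hμ, hconst1 μ hμ] at this
    unfold mE
    linarith
  obtain ⟨μ₀, hμ₀⟩ := hne
  have hpos0 : 0 ≤ mE μ₀ I := pr_nonneg_ind (hC hμ₀) I
  rcases ha1 with h1 | h1 <;> rcases ha2 with h2 | h2
  · right
    intro μ hμ
    rw [hval μ hμ, h1, h2]; ring
  · left
    intro μ hμ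
    rw [hval μ hμ, h1, h2]; ring
  · exfalso
    rw [hval μ₀ hμ₀, h1, h2] at hpos0
    linarith
  · right
    intro μ hμ
    rw [hval μ hμ, h1, h2]; ring
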